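/- arXiv:2501.15906 — 2 statements merged into one kernel-verified Lean document; each statement's English description precedes it below -/
import Mathlib

section
/- For any K ∈ R^{n×n} and any rank-one K = u v^T, rho_1(K) := inf over positive diagonal Δ of ‖Δ K Δ^{-1}‖ satisfies rho_1(K) ≤ Σ_j |u_j v_j|. (Combined with rho_0(K) = Σ_j |u_j v_j| ≤ rho_1(K), one gets rho_0(K) = rho_1(K) = |v|^T|u| for rank-one K.) -/
open Matrix

noncomputable def opNorm {n : ℕ} (M : Matrix (Fin n) (Fin n) ℝ) : ℝ :=
  ‖Matrix.toEuclideanCLM (𝕜 := ℝ) M‖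

noncomputable def rho1 {n : ℕ} (K : Matrix (Fin n) (Fin n) ℝ) : ℝ :=
  sInf { x : ℝ | ∃ d : Fin n → ℝ, (∀ i, 0 < d i) ∧
    x = opNorm (Matrix.diagonal d * K * Matrix.diagonal (fun i => (d i)⁻¹)) }

lemma diag_vecMulVec_diag {n : ℕ} (d u v : Fin n → ℝ) :
    Matrix.diagonal d * Matrix.vecMulVec u v * Matrix.diagonal (fun i => (d i)⁻¹) =
      Matrix.vecMulVec (fun i => d i * u i) (fun j => v j * (d j)⁻¹) := by
  ext i j
  simp [Matrix.mul_apply, Matrix.diagonal, Matrix.vecMulVec_apply, Finset.mul_sum,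
    Finset.sum_mul, Finset.sum_ite_eq, Finset.sum_ite_eq']
  ring

lemma opNorm_vecMulVec_le {n : ℕ} (x y : Fin n → ℝ) :
    opNorm (Matrix.vecMulVec x y) ≤
      Real.sqrt (∑ i, x i ^ 2) * Real.sqrt (∑ i, y i ^ 2) := by
  set X : EuclideanSpace ℝ (Fin n) := (WithLp.equiv 2 _).symm x
  set Y : EuclideanSpace ℝ (Fin n) := (WithLp.equiv 2 _).symm y
  have hX : ‖X‖ = Real.sqrt (∑ i, x i ^ 2) := by
    rw [EuclideanSpace.norm_eq]
    congr 1; apply Finset.sum_congr rfl; intro i _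
    simp [X, sq_abs]
  have hY : ‖Y‖ = Real.sqrt (∑ i, y i ^ 2) := by
    rw [EuclideanSpace.norm_eq]
    congr 1; apply Finset.sum_congr rfl; intro i _
    simp [Y, sq_abs]
  rw [← hX, ← hY]
  apply ContinuousLinearMap.opNorm_le_bound _ (by positivity)
  intro z
  have hz : Matrix.toEuclideanCLM (𝕜 := ℝ) (Matrix.vecMulVec x y) z =
      (inner ℝ Y z : ℝ) • X := by
    apply (WithLp.equiv 2 (Fin n → ℝ)).injective
    rw [WithLp.equiv_apply, WithLp.equiv_apply, Matrix.ofLp_toEuclideanCLM]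
    funext i
    simp only [Matrix.toLin'_apply, Equiv.refl_symm, Equiv.refl_apply, Matrix.mulVec, dotProduct, Matrix.vecMulVec_apply, PiLp.inner_apply,
      X, Y, WithLp.equiv, Equiv.refl_apply, RCLike.inner_apply, conj_trivial,
      WithLp.ofLp_smul, WithLp.ofLp_toLp, Equiv.coe_fn_symm_mk,
      Pi.smul_apply, smul_eq_mul, Finset.sum_mul]
    show ∑ k, x i * y k * z k = ∑ k, z k * y k * x i
    apply Finset.sum_congr rfl
    intro k _
    ring
  rw [hz, norm_smul]
  have := abs_real_inner_le_norm Y z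
  calc ‖(inner ℝ Y z : ℝ)‖ * ‖X‖ ≤ (‖Y‖ * ‖z‖) * ‖X‖ := by
        apply mul_le_mul_of_nonneg_right _ (norm_nonneg _)
        simpa using this
    _ = ‖X‖ * ‖Y‖ * ‖z‖ := by ring

theorem rho1_rank_one_le {n : ℕ} (u v : Fin n → ℝ) (hu : u ≠ 0) (hv : v ≠ 0) :
    rho1 (Matrix.vecMulVec u v) ≤ ∑ j, |u j * v j| := by
  set S := ∑ j, |u j * v j| with hS
  apply le_of_forall_pos_le_add
  intro ε hε
  -- choose t
  set U : ℝ := ∑ i, u i ^ 2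
  set V : ℝ := ∑ i, v i ^ 2
  have hUV : 0 ≤ (U + V) / 2 := by positivity
  set t : ℝ := Real.sqrt (ε / ((U + V) / 2 + 1)) with ht
  have htpos : 0 < t := Real.sqrt_pos.mpr (by positivity)
  set d : Fin n → ℝ := fun i =>
    if u i = 0 then t⁻¹ else if v i = 0 then t else Real.sqrt (|v i| / |u i|) with hd
  have hdpos : ∀ i, 0 < d i := by
    intro i
    simp only [hd]
    split_ifs with h1 h2
    · positivity
    · exact htpos
    · exact Real.sqrt_pos.mpr (by
        apply div_pos (abs_pos.mpr h2) (abs_pos.mpr h1))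
  -- bound the per-coordinate sums
  have hx : ∀ i, (d i * u i) ^ 2 ≤ |u i * v i| + t ^ 2 * u i ^ 2 := by
    intro i
    simp only [hd]
    split_ifs with h1 h2
    · simp [h1]
    · simp [h2, mul_pow]
    · rw [mul_pow, Real.sq_sqrt (by positivity), abs_mul, div_mul_eq_mul_div,
        div_le_iff₀ (abs_pos.mpr h1)]
      nlinarith [sq_abs (u i), abs_nonneg (u i), abs_nonneg (v i),
        mul_nonneg (mul_nonneg (sq_nonneg t) (sq_nonneg (u i))) (abs_nonneg (u i))]
  have hy : ∀ i, (v i * (d i)⁻¹) ^ 2 ≤ |u i * v i| + t ^ 2 * v i ^ 2 := by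
    intro i
    simp only [hd]
    split_ifs with h1 h2
    · simp only [h1, inv_inv, zero_mul, abs_zero, mul_pow, zero_add]
      nlinarith [sq_nonneg (v i), sq_nonneg t]
    · simp [h2]
    · rw [mul_pow, ← Real.sqrt_inv, Real.sq_sqrt (by positivity), abs_mul, inv_div,
        mul_div_assoc', div_le_iff₀ (abs_pos.mpr h2)]
      nlinarith [sq_abs (v i), abs_nonneg (u i), abs_nonneg (v i),
        mul_nonneg (mul_nonneg (sq_nonneg t) (sq_nonneg (v i))) (abs_nonneg (v i))]
  have hSx : ∑ i, (d i * u i) ^ 2 ≤ S + t ^ 2 * U := by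
    calc ∑ i, (d i * u i) ^ 2 ≤ ∑ i, (|u i * v i| + t ^ 2 * u i ^ 2) :=
          Finset.sum_le_sum fun i _ => hx i
      _ = S + t ^ 2 * U := by rw [Finset.sum_add_distrib, ← Finset.mul_sum]
  have hSy : ∑ i, (v i * (d i)⁻¹) ^ 2 ≤ S + t ^ 2 * V := by
    calc ∑ i, (v i * (d i)⁻¹) ^ 2 ≤ ∑ i, (|u i * v i| + t ^ 2 * v i ^ 2) :=
          Finset.sum_le_sum fun i _ => hy i
      _ = S + t ^ 2 * V := by rw [Finset.sum_add_distrib, ← Finset.mul_sum]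
  have hSnn : 0 ≤ S := Finset.sum_nonneg fun i _ => abs_nonneg _
  have ht2 : t ^ 2 = ε / ((U + V) / 2 + 1) := Real.sq_sqrt (by positivity)
  -- the chosen element of the set
  have hmem : opNorm (Matrix.diagonal d * Matrix.vecMulVec u v *
      Matrix.diagonal (fun i => (d i)⁻¹)) ∈
      { x : ℝ | ∃ d : Fin n → ℝ, (∀ i, 0 < d i) ∧
        x = opNorm (Matrix.diagonal d * Matrix.vecMulVec u v *
          Matrix.diagonal (fun i => (d i)⁻¹)) } := ⟨d, hdpos, rfl⟩
  have hbdd : BddBelow { x : ℝ | ∃ d : Fin n → ℝ, (∀ i, 0 < d i) ∧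
      x = opNorm (Matrix.diagonal d * Matrix.vecMulVec u v *
        Matrix.diagonal (fun i => (d i)⁻¹)) } := by
    refine ⟨0, ?_⟩
    rintro x ⟨e, _, rfl⟩
    exact norm_nonneg _
  refine le_trans (csInf_le hbdd hmem) ?_
  rw [diag_vecMulVec_diag]
  refine le_trans (opNorm_vecMulVec_le _ _) ?_
  have h1 : Real.sqrt (∑ i, (d i * u i) ^ 2) ≤ Real.sqrt (S + t ^ 2 * U) :=
    Real.sqrt_le_sqrt hSx
  have h2 : Real.sqrt (∑ i, (v i * (d i)⁻¹) ^ 2) ≤ Real.sqrt (S + t ^ 2 * V) :=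
    Real.sqrt_le_sqrt hSy
  have key : Real.sqrt (S + t ^ 2 * U) * Real.sqrt (S + t ^ 2 * V) ≤ S + ε := by
    have hU : 0 ≤ U := Finset.sum_nonneg fun i _ => sq_nonneg _
    have hV : 0 ≤ V := Finset.sum_nonneg fun i _ => sq_nonneg _
    have ha : 0 ≤ S + t ^ 2 * U := by positivity
    have hb : 0 ≤ S + t ^ 2 * V := by positivity
    have hgm : Real.sqrt (S + t ^ 2 * U) * Real.sqrt (S + t ^ 2 * V) ≤
        ((S + t ^ 2 * U) + (S + t ^ 2 * V)) / 2 := by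
      nlinarith [Real.sq_sqrt ha, Real.sq_sqrt hb, Real.sqrt_nonneg (S + t ^ 2 * U),
        Real.sqrt_nonneg (S + t ^ 2 * V),
        sq_nonneg (Real.sqrt (S + t ^ 2 * U) - Real.sqrt (S + t ^ 2 * V))]
    have hfin : ((S + t ^ 2 * U) + (S + t ^ 2 * V)) / 2 ≤ S + ε := by
      have : t ^ 2 * ((U + V) / 2) ≤ ε := by
        rw [ht2, div_mul_eq_mul_div, div_le_iff₀ (by positivity : (0:ℝ) < (U + V) / 2 + 1)]
        nlinarith
      linarith
    linarith
  calc Real.sqrt (∑ i, (d i * u i) ^ 2) * Real.sqrt (∑ i, (v i * (d i)⁻¹) ^ 2)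
      ≤ Real.sqrt (S + t ^ 2 * U) * Real.sqrt (S + t ^ 2 * V) :=
        mul_le_mul h1 h2 (Real.sqrt_nonneg _) (Real.sqrt_nonneg _)
    _ ≤ S + ε := key
end

section
/- Let A, K_0, K_L ∈ R^{n×n}, T ∈ GL_n(R), with A − K_0 invertible and K_L = u v^T of rank one. If |v^T T| · |((A − K_0) T)^{-1} u| < 1 (dot product of entrywise absolute values of the row vector v^T T and the column vector ((A−K_0)T)^{-1} u), then ρ_0(((A − K_0) T)^{-1} K_L T) < 1, where ρ_0(K) = sup_θ ρ(diag(e^{iθ_1},...,e^{iθ_n}) K). Conversely, if the dot product is ≥ 1 then ρ_0 ≥ 1. -/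
open Matrix Complex

noncomputable def specRad {n : ℕ} (M : Matrix (Fin n) (Fin n) ℂ) : ℝ :=
  sSup ((fun z : ℂ => ‖z‖) '' spectrum ℂ M)

noncomputable def rho0 {n : ℕ} (K : Matrix (Fin n) (Fin n) ℝ) : ℝ :=
  ⨆ θ : Fin n → ℝ,
    specRad (Matrix.diagonal (fun j => Complex.exp ((θ j : ℂ) * Complex.I)) *
      K.map (fun x => (x : ℂ)))

theorem mvv {n : ℕ} (x y v : Fin n → ℂ) : (vecMulVec x y).mulVec v = (y ⬝ᵥ v) • x := by
  ext i
  simp only [vecMulVec, mulVec, dotProduct, Pi.smul_apply, smul_eq_mul, of_apply]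
  rw [Finset.sum_mul]
  exact Finset.sum_congr rfl fun _ _ => by ring

theorem spec_sub {n : ℕ} (x y : Fin n → ℂ) (μ : ℂ) (hμ : μ ∈ spectrum ℂ (vecMulVec x y)) :
    μ = 0 ∨ μ = y ⬝ᵥ x := by
  by_contra h
  push_neg at h
  rw [← AlgEquiv.spectrum_eq Matrix.toLinAlgEquiv' (vecMulVec x y),
    ← Module.End.hasEigenvalue_iff_mem_spectrum] at hμ
  obtain ⟨w, hw⟩ := hμ.exists_hasEigenvector
  have heq : (y ⬝ᵥ w) • x = μ • w := by
    rw [← mvv x y w, ← Matrix.toLinAlgEquiv'_apply]; exact hw.apply_eq_smul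
  have hw0 : w ≠ 0 := hw.right
  have hc : y ⬝ᵥ w ≠ 0 := by
    intro hc
    rw [hc, zero_smul] at heq
    exact hw0 ((smul_eq_zero.mp heq.symm).resolve_left h.1)
  have hdot := congrArg (fun z => y ⬝ᵥ z) heq
  simp only [dotProduct_smul, smul_eq_mul] at hdot
  exact h.2 (mul_left_cancel₀ hc (by rw [hdot]; ring))

theorem spec_mem {n : ℕ} (x y : Fin n → ℂ) (ht : y ⬝ᵥ x ≠ 0) :
    y ⬝ᵥ x ∈ spectrum ℂ (vecMulVec x y) := by
  rw [← AlgEquiv.spectrum_eq Matrix.toLinAlgEquiv' (vecMulVec x y),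
    ← Module.End.hasEigenvalue_iff_mem_spectrum]
  have hx : x ≠ 0 := by rintro rfl; simp at ht
  apply Module.End.hasEigenvalue_of_hasEigenvector (x := x)
  constructor
  · rw [Module.End.mem_eigenspace_iff, Matrix.toLinAlgEquiv'_apply, mvv]
  · exact hx

theorem specRad_vecMulVec {n : ℕ} (x y : Fin n → ℂ) :
    specRad (vecMulVec x y) = ‖y ⬝ᵥ x‖ := by
  unfold specRad
  apply le_antisymm
  · apply Real.sSup_le _ (norm_nonneg _)
    rintro r ⟨μ, hμ, rfl⟩
    rcases spec_sub x y μ hμ with rfl | rfl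
    · simpa using norm_nonneg _
    · exact le_refl _
  · by_cases ht : y ⬝ᵥ x = 0
    · rw [ht]
      simpa using Real.sSup_nonneg (by rintro r ⟨μ, _, rfl⟩; exact norm_nonneg _)
    · apply le_csSup
      · refine ⟨‖y ⬝ᵥ x‖, ?_⟩
        rintro r ⟨μ, hμ, rfl⟩
        rcases spec_sub x y μ hμ with rfl | rfl
        · simpa using norm_nonneg _
        · exact le_refl _
      · exact ⟨_, spec_mem x y ht, rfl⟩

theorem diag_mul_vmv {n : ℕ} (d x y : Fin n → ℂ) :
    Matrix.diagonal d * vecMulVec x y = vecMulVec (fun j => d j * x j) y := by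
  ext i j
  rw [Matrix.diagonal_mul]
  simp [vecMulVec, mul_assoc]

theorem map_vmv {n : ℕ} (x y : Fin n → ℝ) :
    (vecMulVec x y).map (fun t => (t : ℂ)) =
      vecMulVec (fun j => (x j : ℂ)) (fun j => (y j : ℂ)) := by
  ext i j
  simp [vecMulVec]

theorem rho0_vecMulVec {n : ℕ} (a b : Fin n → ℝ) :
    rho0 (vecMulVec a b) = ∑ j, |a j * b j| := by
  have hval : ∀ θ : Fin n → ℝ,
      specRad (Matrix.diagonal (fun j => Complex.exp ((θ j : ℂ) * Complex.I)) *
        (vecMulVec a b).map (fun t => (t : ℂ)))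
      = ‖∑ j, (b j : ℂ) * (Complex.exp ((θ j : ℂ) * Complex.I) * (a j : ℂ))‖ := by
    intro θ
    rw [map_vmv, diag_mul_vmv, specRad_vecMulVec]
    rfl
  have hub : ∀ θ : Fin n → ℝ,
      ‖∑ j, (b j : ℂ) * (Complex.exp ((θ j : ℂ) * Complex.I) * (a j : ℂ))‖
        ≤ ∑ j, |a j * b j| := by
    intro θ
    refine le_trans (norm_sum_le _ _) (le_of_eq (Finset.sum_congr rfl fun j _ => ?_))
    rw [norm_mul, norm_mul, Complex.norm_exp_ofReal_mul_I,
      Complex.norm_real, Complex.norm_real, Real.norm_eq_abs, Real.norm_eq_abs, abs_mul]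
    ring
  unfold rho0
  apply le_antisymm
  · exact ciSup_le fun θ => by rw [hval]; exact hub θ
  · set θ₀ : Fin n → ℝ := fun j => if 0 ≤ a j * b j then 0 else Real.pi with hθ₀
    have key : ‖∑ j, (b j : ℂ) * (Complex.exp ((θ₀ j : ℂ) * Complex.I) * (a j : ℂ))‖
        = ∑ j, |a j * b j| := by
      have : (∑ j, (b j : ℂ) * (Complex.exp ((θ₀ j : ℂ) * Complex.I) * (a j : ℂ)))
          = ((∑ j, |a j * b j| : ℝ) : ℂ) := by
        rw [Complex.ofReal_sum]
        refine Finset.sum_congr rfl fun j _ => ?_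
        by_cases hj : 0 ≤ a j * b j
        · have h0 : θ₀ j = 0 := if_pos hj
          rw [h0, _root_.abs_of_nonneg hj]
          norm_num [Complex.exp_zero]
          push_cast
          ring
        · have h0 : θ₀ j = Real.pi := if_neg hj
          rw [h0, _root_.abs_of_neg (lt_of_not_ge hj), Complex.exp_pi_mul_I]
          push_cast
          ring
      rw [this, Complex.norm_real, Real.norm_eq_abs,
        _root_.abs_of_nonneg (Finset.sum_nonneg fun j _ => abs_nonneg _)]
    calc (∑ j, |a j * b j|) = _ := by rw [← key, ← hval θ₀]
    _ ≤ _ := le_ciSup ⟨∑ j, |a j * b j|, by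
        rintro r ⟨θ, rfl⟩
        dsimp only
        rw [hval θ]
        exact hub θ⟩ θ₀

theorem vmv_mul {n : ℕ} (u v : Fin n → ℝ) (T : Matrix (Fin n) (Fin n) ℝ) :
    vecMulVec u v * T = vecMulVec u (Matrix.vecMul v T) := by
  ext i j
  simp only [vecMulVec, mul_apply, vecMul, dotProduct, of_apply, Finset.mul_sum]
  exact Finset.sum_congr rfl fun _ _ => by ring

theorem mul_vmv {n : ℕ} (M : Matrix (Fin n) (Fin n) ℝ) (x y : Fin n → ℝ) :
    M * vecMulVec x y = vecMulVec (M.mulVec x) y := by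
  ext i j
  simp only [vecMulVec, mul_apply, mulVec, dotProduct, of_apply, Finset.sum_mul]
  exact Finset.sum_congr rfl fun _ _ => by ring

theorem restricted_observability_stability {n : ℕ}
    (A K₀ T : Matrix (Fin n) (Fin n) ℝ) (u v : Fin n → ℝ)
    (hT : IsUnit T.det) (hAK : IsUnit (A - K₀).det) :
    ((∑ j, |Matrix.vecMul v T j| * |((A - K₀) * T)⁻¹.mulVec u j|) < 1 →
      rho0 (((A - K₀) * T)⁻¹ * (Matrix.vecMulVec u v * T)) < 1) ∧
    (1 ≤ (∑ j, |Matrix.vecMul v T j| * |((A - K₀) * T)⁻¹.mulVec u j|) →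
      1 ≤ rho0 (((A - K₀) * T)⁻¹ * (Matrix.vecMulVec u v * T))) := by
  have hM : ((A - K₀) * T)⁻¹ * (Matrix.vecMulVec u v * T)
      = vecMulVec (((A - K₀) * T)⁻¹.mulVec u) (Matrix.vecMul v T) := by
    rw [vmv_mul, mul_vmv]
  have hrho : rho0 (((A - K₀) * T)⁻¹ * (Matrix.vecMulVec u v * T))
      = ∑ j, |Matrix.vecMul v T j| * |((A - K₀) * T)⁻¹.mulVec u j| := by
    rw [hM, rho0_vecMulVec]
    exact Finset.sum_congr rfl fun j _ => by rw [abs_mul]; ring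
  rw [hrho]
  exact ⟨id, id⟩
end
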